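/- For every integer n ≥ 2 and every real r > 0, the integral ∫₀^∞ e^{-r²/(5t)} e^{-t/2} t^{-n} dt is at most C_n · r^{2-2n}, where C_n = 5^{n-1} Γ(n-1) (i.e. 5^{n-1}(n-2)!). In particular the integral is finite and bounded by a constant times r^{2-2n}. -/

import Mathlib

open MeasureTheory Set Real

/-- For `n ≥ 2` and `r > 0`, `∫₀^∞ e^{-r²/(5t)} e^{-t/2} t^{-n} dt ≤ 5^{n-1}(n-2)! · r^{2-2n}`. -/
theorem stmt2 (n : ℕ) (hn : 2 ≤ n) (r : ℝ) (hr : 0 < r) :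
    (∫ t in Set.Ioi (0 : ℝ),
        Real.exp (-(r ^ 2) / (5 * t)) * Real.exp (-t / 2) * t ^ (-(n : ℝ)))
      ≤ (5 : ℝ) ^ (n - 1) * ((n - 2).factorial : ℝ) * r ^ (2 - 2 * (n : ℝ)) := by
  have hr2 : (0:ℝ) < r ^ 2 := by positivity
  set F : ℝ → ℝ := fun t => Real.exp (-(r ^ 2) / (5 * t)) * Real.exp (-t / 2) * t ^ (-(n : ℝ))
    with hF
  set g : ℝ → ℝ := fun y => y ^ ((n:ℝ) - 2) * Real.exp (-(1/5) * y ^ (1:ℝ)) with hg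
  -- Step 1: scaling t = r^2 * x
  have h1 : (∫ t in Set.Ioi (0:ℝ), F t) = r ^ 2 * ∫ x in Set.Ioi (0:ℝ), F (r ^ 2 * x) := by
    rw [integral_comp_mul_left_Ioi F 0 hr2, mul_zero, smul_eq_mul, ← mul_assoc,
      mul_inv_cancel₀ hr2.ne', one_mul]
  -- Step 2: inversion x = y⁻¹
  have h2 : (∫ x in Set.Ioi (0:ℝ), F (r ^ 2 * x))
      = ∫ y in Set.Ioi (0:ℝ), (|(-1:ℝ)| * y ^ ((-1:ℝ) - 1)) • F (r ^ 2 * y ^ (-1:ℝ)) :=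
    (integral_comp_rpow_Ioi (fun x => F (r ^ 2 * x)) (by norm_num : (-1:ℝ) ≠ 0)).symm
  -- Step 3: pointwise identification
  have h3 : ∀ y ∈ Set.Ioi (0:ℝ),
      (|(-1:ℝ)| * y ^ ((-1:ℝ) - 1)) • F (r ^ 2 * y ^ (-1:ℝ))
      = (r ^ 2) ^ (-(n:ℝ)) * (g y * Real.exp (-(r ^ 2 * y⁻¹) / 2)) := by
    intro y hy
    have hy0 : (0:ℝ) < y := hy
    rw [hF, hg]
    simp only [abs_neg, abs_one, one_mul, smul_eq_mul]
    rw [Real.rpow_neg_one, Real.rpow_one]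
    have e1 : -(r ^ 2) / (5 * (r ^ 2 * y⁻¹)) = -(1/5) * y := by field_simp
    have e2 : (r ^ 2 * y⁻¹) ^ (-(n:ℝ)) = (r ^ 2) ^ (-(n:ℝ)) * y ^ (n:ℝ) := by
      rw [Real.mul_rpow hr2.le (inv_nonneg.mpr hy0.le), ← Real.rpow_neg_one y,
        ← Real.rpow_mul hy0.le]
      norm_num
    have e3 : y ^ ((-1:ℝ) - 1) = y ^ (-2:ℝ) := by norm_num
    have e4 : y ^ (-2:ℝ) * y ^ (n:ℝ) = y ^ ((n:ℝ) - 2) := by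
      rw [← Real.rpow_add hy0]
      congr 1; ring
    rw [e1, e2, e3, ← e4]
    ring
  -- rewrite the integral
  rw [h1, h2, setIntegral_congr_fun measurableSet_Ioi h3, integral_const_mul, ← mul_assoc]
  -- integrability of the majorant
  have hgint : IntegrableOn g (Set.Ioi (0:ℝ)) := by
    refine integrableOn_rpow_mul_exp_neg_mul_rpow ?_ one_pos (by norm_num)
    have : (2:ℝ) ≤ (n:ℝ) := by exact_mod_cast hn
    linarith
  -- monotonicity
  have hmono : (∫ y in Set.Ioi (0:ℝ), g y * Real.exp (-(r ^ 2 * y⁻¹) / 2))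
      ≤ ∫ y in Set.Ioi (0:ℝ), g y := by
    refine integral_mono_of_nonneg ?_ hgint ?_
    · filter_upwards [ae_restrict_mem measurableSet_Ioi] with y hy
      have hy0 : (0:ℝ) < y := hy
      have : 0 ≤ g y := by
        rw [hg]; positivity
      positivity
    · filter_upwards [ae_restrict_mem measurableSet_Ioi] with y hy
      have hy0 : (0:ℝ) < y := hy
      have hgy : 0 ≤ g y := by rw [hg]; positivity
      calc g y * Real.exp (-(r ^ 2 * y⁻¹) / 2) ≤ g y * 1 := by
            refine mul_le_mul_of_nonneg_left ?_ hgy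
            refine Real.exp_le_one_iff.mpr ?_
            have h0 : 0 ≤ r ^ 2 * y⁻¹ := by positivity
            linarith
        _ = g y := mul_one _
  have hq : (-1:ℝ) < (n:ℝ) - 2 := by
    have : (2:ℝ) ≤ (n:ℝ) := by exact_mod_cast hn
    linarith
  have hval : (∫ y in Set.Ioi (0:ℝ), g y)
      = ((1:ℝ)/5) ^ (-(((n:ℝ) - 2) + 1)/1) * (1/1) * Real.Gamma ((((n:ℝ) - 2) + 1)/1) := by
    rw [hg]
    exact integral_rpow_mul_exp_neg_mul_rpow one_pos hq (by norm_num)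
  have hA : Real.Gamma ((((n:ℝ) - 2) + 1)/1) = ((n - 2).factorial : ℝ) := by
    rw [div_one, show ((n:ℝ) - 2) + 1 = ((n - 2 : ℕ) : ℝ) + 1 by
      push_cast [Nat.cast_sub hn]; ring]
    exact Real.Gamma_nat_eq_factorial (n - 2)
  have hB : ((1:ℝ)/5) ^ (-(((n:ℝ) - 2) + 1)/1) = (5:ℝ) ^ (n - 1) := by
    rw [div_one, one_div, Real.inv_rpow (by norm_num), ← Real.rpow_neg (by norm_num : (0:ℝ) ≤ 5),
      neg_neg, show ((n:ℝ) - 2) + 1 = ((n - 1 : ℕ) : ℝ) by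
        push_cast [Nat.cast_sub (by omega : 1 ≤ n)]; ring,
      Real.rpow_natCast]
  have hC : r ^ 2 * (r ^ 2) ^ (-(n:ℝ)) = r ^ (2 - 2 * (n:ℝ)) := by
    rw [← Real.rpow_natCast r 2, ← Real.rpow_mul hr.le, ← Real.rpow_add hr]
    push_cast
    congr 1; ring
  calc r ^ 2 * (r ^ 2) ^ (-(n:ℝ)) * ∫ y in Set.Ioi (0:ℝ), g y * Real.exp (-(r ^ 2 * y⁻¹) / 2)
      ≤ r ^ 2 * (r ^ 2) ^ (-(n:ℝ)) * ∫ y in Set.Ioi (0:ℝ), g y := by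
        refine mul_le_mul_of_nonneg_left hmono ?_
        positivity
    _ = (5 : ℝ) ^ (n - 1) * ((n - 2).factorial : ℝ) * r ^ (2 - 2 * (n : ℝ)) := by
        rw [hval, hA, hB, ← hC]
        ring
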